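/- Let x₁, x₂, x₃, a ∈ ℝ³ satisfy det[xᵢ xⱼ a] ≠ 0 for all 1 ≤ i < j ≤ 3, and let y₁, y₂, y₃, b ∈ ℝ³ satisfy det[yᵢ yⱼ b] ≠ 0 for all 1 ≤ i < j ≤ 3, where det[u v w] is the determinant of the 3×3 matrix with columns u, v, w. Then there exist flatland cameras A and B (real 2×3 matrices of rank 2) with A·a = 0 and B·b = 0 such that A·xᵢ ∼ B·yᵢ for i = 1, 2, 3. -/

import Mathlib

open Matrix

/-- `u ∼ v`: the vectors are equal up to a nonzero real scalar. -/
def Sim {k : ℕ} (u v : Fin k → ℝ) : Prop := ∃ c : ℝ, c ≠ 0 ∧ u = c • v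

/-- Determinant of the 3×3 matrix with columns `u`, `v`, `w`. -/
def det3 (u v w : Fin 3 → ℝ) : ℝ := ((Matrix.of ![u, v, w])ᵀ).det

lemma det3_expand (u v w : Fin 3 → ℝ) :
    det3 u v w = u 0 * v 1 * w 2 - u 0 * v 2 * w 1 - u 1 * v 0 * w 2
      + u 1 * v 2 * w 0 + u 2 * v 0 * w 1 - u 2 * v 1 * w 0 := by
  rw [det3, Matrix.det_transpose]
  simp [Matrix.det_fin_three]

lemma dot_cross (v u w : Fin 3 → ℝ) : (crossProduct u w) ⬝ᵥ v = det3 v u w := by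
  rw [dotProduct_comm, triple_product_eq_det, det3, Matrix.det_transpose]; rfl

lemma mulVec_two (r s v : Fin 3 → ℝ) :
    (Matrix.of ![r, s]).mulVec v = ![r ⬝ᵥ v, s ⬝ᵥ v] := by
  ext i
  fin_cases i <;> simp [Matrix.mulVec]

lemma rank_two_of_surj (A : Matrix (Fin 2) (Fin 3) ℝ)
    (h : Function.Surjective A.mulVec) : A.rank = 2 := by
  have : LinearMap.range A.mulVecLin = ⊤ := LinearMap.range_eq_top.2 h
  rw [Matrix.rank, this, finrank_top]
  simp

/-- The n < 4 case of the Loci Theorem: for three labeled point pairs in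
general position with respect to the chosen centers `a`, `b`, a common image
always exists. -/
theorem three_points_common_image_always_exists
    (x y : Fin 3 → Fin 3 → ℝ) (a b : Fin 3 → ℝ)
    (hx : ∀ i j, i < j → det3 (x i) (x j) a ≠ 0)
    (hy : ∀ i j, i < j → det3 (y i) (y j) b ≠ 0) :
    ∃ A B : Matrix (Fin 2) (Fin 3) ℝ, A.rank = 2 ∧ B.rank = 2 ∧
      A.mulVec a = 0 ∧ B.mulVec b = 0 ∧
      ∀ i, Sim (A.mulVec (x i)) (B.mulVec (y i)) := by
  set D := det3 (x 0) (x 1) a with hD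
  set α := det3 (x 2) (x 1) a with hα
  set β := det3 (x 0) (x 2) a with hβ
  set E := det3 (y 0) (y 1) b with hE
  set α' := det3 (y 2) (y 1) b with hα'
  set β' := det3 (y 0) (y 2) b with hβ'
  have hD0 : D ≠ 0 := hx 0 1 (by decide)
  have hE0 : E ≠ 0 := hy 0 1 (by decide)
  have hβ0 : β ≠ 0 := hx 0 2 (by decide)
  have hβ'0 : β' ≠ 0 := hy 0 2 (by decide)
  have hα0 : α ≠ 0 := by
    have h12 := hx 1 2 (by decide)
    have : α = - det3 (x 1) (x 2) a := by rw [hα, det3_expand, det3_expand]; ring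
    rw [this]
    simpa using h12
  have hα'0 : α' ≠ 0 := by
    have h12 := hy 1 2 (by decide)
    have : α' = - det3 (y 1) (y 2) b := by rw [hα', det3_expand, det3_expand]; ring
    rw [this]
    simpa using h12
  set A : Matrix (Fin 2) (Fin 3) ℝ :=
    Matrix.of ![α' • (crossProduct (x 1) a), β' • (crossProduct a (x 0))] with hAdef
  set B : Matrix (Fin 2) (Fin 3) ℝ :=
    Matrix.of ![α • (crossProduct (y 1) b), β • (crossProduct b (y 0))] with hBdef
  have hAv : ∀ v, A.mulVec v = ![α' * det3 v (x 1) a, β' * det3 v a (x 0)] := by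
    intro v
    rw [hAdef, mulVec_two, smul_dotProduct, smul_dotProduct, dot_cross, dot_cross]
    rfl
  have hBv : ∀ v, B.mulVec v = ![α * det3 v (y 1) b, β * det3 v b (y 0)] := by
    intro v
    rw [hBdef, mulVec_two, smul_dotProduct, smul_dotProduct, dot_cross, dot_cross]
    rfl
  have hAa : A.mulVec a = 0 := by
    rw [hAv]
    have z1 : det3 a (x 1) a = 0 := by rw [det3_expand]; ring
    have z2 : det3 a a (x 0) = 0 := by rw [det3_expand]; ring
    funext i
    fin_cases i <;> simp [z1, z2]
  have hBb : B.mulVec b = 0 := by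
    rw [hBv]
    have z1 : det3 b (y 1) b = 0 := by rw [det3_expand]; ring
    have z2 : det3 b b (y 0) = 0 := by rw [det3_expand]; ring
    funext i
    fin_cases i <;> simp [z1, z2]
  have hA0 : A.mulVec (x 0) = ![α' * D, 0] := by
    rw [hAv]
    have z1 : det3 (x 0) a (x 0) = 0 := by rw [det3_expand]; ring
    simp [z1, hD]
  have hA1 : A.mulVec (x 1) = ![0, β' * D] := by
    rw [hAv]
    have z1 : det3 (x 1) (x 1) a = 0 := by rw [det3_expand]; ring
    have z2 : det3 (x 1) a (x 0) = D := by rw [hD, det3_expand, det3_expand]; ring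
    simp [z1, z2]
  have hA2 : A.mulVec (x 2) = ![α' * α, β' * β] := by
    rw [hAv]
    have z2 : det3 (x 2) a (x 0) = β := by rw [hβ, det3_expand, det3_expand]; ring
    simp [z2, hα]
  have hB0 : B.mulVec (y 0) = ![α * E, 0] := by
    rw [hBv]
    have z1 : det3 (y 0) b (y 0) = 0 := by rw [det3_expand]; ring
    simp [z1, hE]
  have hB1 : B.mulVec (y 1) = ![0, β * E] := by
    rw [hBv]
    have z1 : det3 (y 1) (y 1) b = 0 := by rw [det3_expand]; ring
    have z2 : det3 (y 1) b (y 0) = E := by rw [hE, det3_expand, det3_expand]; ring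
    simp [z1, z2]
  have hB2 : B.mulVec (y 2) = ![α * α', β * β'] := by
    rw [hBv]
    have z2 : det3 (y 2) b (y 0) = β' := by rw [hβ', det3_expand, det3_expand]; ring
    simp [z2, hα']
  refine ⟨A, B, ?_, ?_, hAa, hBb, ?_⟩
  · apply rank_two_of_surj
    intro w
    refine ⟨(w 0 / (α' * D)) • x 0 + (w 1 / (β' * D)) • x 1, ?_⟩
    rw [Matrix.mulVec_add, Matrix.mulVec_smul, Matrix.mulVec_smul, hA0, hA1]
    funext i
    fin_cases i <;> · simp; field_simp
  · apply rank_two_of_surj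
    intro w
    refine ⟨(w 0 / (α * E)) • y 0 + (w 1 / (β * E)) • y 1, ?_⟩
    rw [Matrix.mulVec_add, Matrix.mulVec_smul, Matrix.mulVec_smul, hB0, hB1]
    funext i
    fin_cases i <;> · simp; field_simp
  · intro i
    fin_cases i
    · show Sim (A.mulVec (x 0)) (B.mulVec (y 0))
      refine ⟨(α' * D) / (α * E), div_ne_zero (mul_ne_zero hα'0 hD0) (mul_ne_zero hα0 hE0), ?_⟩
      rw [hA0, hB0]
      funext i
      fin_cases i <;> simp <;> field_simp
    · show Sim (A.mulVec (x 1)) (B.mulVec (y 1))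
      refine ⟨(β' * D) / (β * E), div_ne_zero (mul_ne_zero hβ'0 hD0) (mul_ne_zero hβ0 hE0), ?_⟩
      rw [hA1, hB1]
      funext i
      fin_cases i <;> simp <;> field_simp
    · show Sim (A.mulVec (x 2)) (B.mulVec (y 2))
      refine ⟨1, one_ne_zero, ?_⟩
      rw [hA2, hB2]
      funext i
      fin_cases i <;> simp <;> ring
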